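/- Let k be a field and let D₁ and D₂ be division rings that are k-algebras (so that k maps into the centre of each). Suppose that D₁ is finite-dimensional over its centre Z(D₁), that D₂ is finite-dimensional over its centre Z(D₂), and that dim_{Z(D₁)} D₁ = dim_{Z(D₂)} D₂. If φ : D₁ → D₂ is an injective k-algebra homomorphism, then φ maps Z(D₁) into Z(D₂), i.e. for every a in the centre of D₁, φ(a) lies in the centre of D₂. -/

import Mathlib

set_option maxHeartbeats 1000000
set_option synthInstance.maxHeartbeats 400000

section Aux

variable {k : Type*} [Field k] {D₁ D₂ : Type*} [DivisionRing D₁] [DivisionRing D₂]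
  [Algebra k D₁] [Algebra k D₂]

/-- Key lemma (induction on length): if `c : Fin m → D₂` consists of elements commuting with
the image of `φ` and admits no nontrivial relation `∑ φ(z i) * c i = 0` with central
coefficients `z i ∈ Z(D₁)`, then it admits no nontrivial relation with arbitrary
coefficients in `D₁`. -/
theorem lemA (φ : D₁ →ₐ[k] D₂) (hφ : Function.Injective φ) (m : ℕ) :
    ∀ (c : Fin m → D₂),
      (∀ i (d : D₁), c i * φ d = φ d * c i) →
      (∀ (z : Fin m → D₁), (∀ i, z i ∈ Subring.center D₁) →
          ∑ i, φ (z i) * c i = 0 → ∀ i, z i = 0) →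
      ∀ (e : Fin m → D₁), ∑ i, φ (e i) * c i = 0 → ∀ i, e i = 0 := by
  induction m with
  | zero => exact fun c _ _ e _ i => i.elim0
  | succ m ih =>
    intro c hc hind e hrel
    have hc' : ∀ (j : Fin m) (d : D₁), c j.succ * φ d = φ d * c j.succ := fun j d => hc _ d
    have hind' : ∀ (z : Fin m → D₁), (∀ j, z j ∈ Subring.center D₁) →
        ∑ j, φ (z j) * c j.succ = 0 → ∀ j, z j = 0 := by
      intro z hz hs
      have h0 : ∀ i, (Fin.cases 0 z : Fin (m+1) → D₁) i = 0 := by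
        apply hind
        · intro i
          induction i using Fin.cases with
          | zero => simpa using Subring.zero_mem _
          | succ j => simpa using hz j
        · rw [Fin.sum_univ_succ]; simpa using hs
      intro j; simpa using h0 j.succ
    by_cases h0 : e 0 = 0
    · have hrest : ∀ j, e (Fin.succ j) = 0 := by
        apply ih (fun j => c j.succ) hc' hind'
        have := hrel
        rw [Fin.sum_univ_succ, h0] at this
        simpa using this
      intro i
      induction i using Fin.cases with
      | zero => exact h0
      | succ j => exact hrest j
    · exfalso
      set e' : Fin (m+1) → D₁ := fun i => (e 0)⁻¹ * e i with he'
      have hS : ∑ i, φ (e' i) * c i = 0 := by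
        have : ∑ i, φ (e' i) * c i = φ ((e 0)⁻¹) * ∑ i, φ (e i) * c i := by
          rw [Finset.mul_sum]
          refine Finset.sum_congr rfl fun i _ => ?_
          rw [he']; simp [map_mul, mul_assoc]
        rw [this, hrel, mul_zero]
      have hcent : ∀ j : Fin m, e' j.succ ∈ Subring.center D₁ := by
        intro j
        rw [Subring.mem_center_iff]
        intro d
        have hdrel : ∑ j : Fin m, φ (d * e' j.succ - e' j.succ * d) * c j.succ = 0 := by
          have expand : ∑ j : Fin m, φ (d * e' j.succ - e' j.succ * d) * c j.succ
              = φ d * (∑ i, φ (e' i) * c i) - (∑ i, φ (e' i) * c i) * φ d := by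
            rw [Finset.mul_sum, Finset.sum_mul]
            rw [show (∑ i, φ d * (φ (e' i) * c i)) = ∑ i : Fin (m+1),
                φ (d * e' i) * c i from Finset.sum_congr rfl fun i _ => by
                  rw [map_mul φ d (e' i), mul_assoc]]
            rw [show (∑ i, (φ (e' i) * c i) * φ d) = ∑ i : Fin (m+1),
                φ (e' i * d) * c i from Finset.sum_congr rfl fun i _ => by
                  rw [map_mul φ (e' i) d, mul_assoc, hc i d, mul_assoc]]
            rw [← Finset.sum_sub_distrib]
            rw [Fin.sum_univ_succ (f := fun i => φ (d * e' i) * c i - φ (e' i * d) * c i)]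
            have h1 : e' 0 = 1 := by rw [he']; exact inv_mul_cancel₀ h0
            rw [h1]
            simp only [mul_one, one_mul, sub_self]
            rw [zero_add]
            refine Finset.sum_congr rfl fun j _ => ?_
            rw [map_sub, sub_mul]
          rw [expand, hS, mul_zero, zero_mul, sub_zero]
        have := ih (fun j => c j.succ) hc' hind'
          (fun j => d * e' j.succ - e' j.succ * d) hdrel j
        exact sub_eq_zero.mp this
      have hallcent : ∀ i, e' i ∈ Subring.center D₁ := by
        intro i
        induction i using Fin.cases with
        | zero =>
          have h1 : e' 0 = 1 := by rw [he']; exact inv_mul_cancel₀ h0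
          rw [h1]; exact Subring.one_mem _
        | succ j => exact hcent j
      have := hind e' hallcent hS 0
      rw [he'] at this
      simp only [inv_mul_cancel₀ h0] at this
      exact one_ne_zero this

/-- The transposed lemma: coefficients on the right, from the commuting set. -/
theorem lemB (φ : D₁ →ₐ[k] D₂) (hφ : Function.Injective φ) (n : ℕ) (v : Fin n → D₁)
    (hv : ∀ (z : Fin n → D₁), (∀ i, z i ∈ Subring.center D₁) →
        ∑ i, z i * v i = 0 → ∀ i, z i = 0)
    (c : Fin n → D₂) (hc : ∀ i (d : D₁), c i * φ d = φ d * c i)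
    (hrel : ∑ i, φ (v i) * c i = 0) : ∀ i, c i = 0 := by
  letI : Module (Subring.center D₁) D₂ :=
    Module.compHom D₂ (φ.toRingHom.comp (Subring.center D₁).subtype)
  have hsmul : ∀ (z : Subring.center D₁) (x : D₂), z • x = φ (z : D₁) * x := fun _ _ => rfl
  set V : Submodule (Subring.center D₁) D₂ :=
    Submodule.span (Subring.center D₁) (Set.range c) with hV
  haveI : FiniteDimensional (Subring.center D₁) V :=
    FiniteDimensional.span_of_finite (Subring.center D₁) (Set.finite_range c)
  -- every element of V commutes with the image of φ
  have hVcent : ∀ x ∈ V, ∀ d : D₁, x * φ d = φ d * x := by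
    intro x hx
    induction hx using Submodule.span_induction with
    | mem x hx => obtain ⟨i, rfl⟩ := hx; exact hc i
    | zero => intro d; simp
    | add x y _ _ hx hy => intro d; rw [add_mul, mul_add, hx, hy]
    | smul z x _ hx =>
      intro d
      rw [hsmul, mul_assoc, hx d, ← mul_assoc, ← mul_assoc]
      congr 1
      rw [← map_mul, ← map_mul,
        show (z : D₁) * d = d * (z : D₁) from (Subring.mem_center_iff.mp z.2 d).symm]
  haveI : Module.Free (Subring.center D₁) V := Module.Free.of_divisionRing _ _
  set r := Module.finrank (Subring.center D₁) V with hr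
  set b : Module.Basis (Fin r) (Subring.center D₁) V := Module.finBasis (Subring.center D₁) V with hb
  set z : Fin n → Fin r → Subring.center D₁ :=
    fun i j => b.repr ⟨c i, Submodule.subset_span ⟨i, rfl⟩⟩ j with hz
  have hci : ∀ i, c i = ∑ j, φ ((z i j : D₁)) * (b j : D₂) := by
    intro i
    have hrepr := b.sum_repr ⟨c i, Submodule.subset_span ⟨i, rfl⟩⟩
    have hcoe : ((∑ j, b.repr ⟨c i, Submodule.subset_span ⟨i, rfl⟩⟩ j • b j : V) : D₂)
        = c i := by rw [hrepr]
    rw [← hcoe]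
    rw [show ((∑ j, b.repr ⟨c i, Submodule.subset_span ⟨i, rfl⟩⟩ j • b j : V) : D₂)
        = ∑ j, ((b.repr ⟨c i, Submodule.subset_span ⟨i, rfl⟩⟩ j • b j : V) : D₂) from
      Submodule.coe_sum _ _ _]
    refine Finset.sum_congr rfl fun j _ => ?_
    rw [Submodule.coe_smul, hsmul]
  -- rearrange the main relation
  have hmain : ∑ j : Fin r, φ (∑ i, (z i j : D₁) * v i) * (b j : D₂) = 0 := by
    rw [← hrel]
    rw [show (∑ i, φ (v i) * c i)
        = ∑ i, ∑ j, φ ((z i j : D₁) * v i) * (b j : D₂) from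
      Finset.sum_congr rfl fun i _ => by
        rw [hci i, Finset.mul_sum]
        refine Finset.sum_congr rfl fun j _ => ?_
        rw [← mul_assoc, ← map_mul φ (v i) ((z i j : D₁)),
          show v i * (z i j : D₁) = (z i j : D₁) * v i from
            Subring.mem_center_iff.mp (z i j).2 (v i)]]
    rw [Finset.sum_comm]
    refine Finset.sum_congr rfl fun j _ => ?_
    rw [map_sum, Finset.sum_mul]
  have hbind : ∀ (w : Fin r → D₁), (∀ j, w j ∈ Subring.center D₁) →
      ∑ j, φ (w j) * (b j : D₂) = 0 → ∀ j, w j = 0 := by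
    intro w hw hsum
    have hsum' : ∑ j, (⟨w j, hw j⟩ : Subring.center D₁) • (b j) = (0 : V) := by
      apply Subtype.ext
      rw [show ((∑ j, (⟨w j, hw j⟩ : Subring.center D₁) • (b j) : V) : D₂)
          = ∑ j, (((⟨w j, hw j⟩ : Subring.center D₁) • (b j) : V) : D₂) from
        Submodule.coe_sum _ _ _]
      rw [show ((0 : V) : D₂) = 0 from rfl, ← hsum]
      refine Finset.sum_congr rfl fun j _ => ?_
      rw [Submodule.coe_smul, hsmul]
    intro j
    have := Fintype.linearIndependent_iff.mp b.linearIndependent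
      (fun j => (⟨w j, hw j⟩ : Subring.center D₁)) hsum' j
    exact congrArg Subtype.val this
  have hbcent : ∀ (j : Fin r) (d : D₁), (b j : D₂) * φ d = φ d * (b j : D₂) :=
    fun j d => hVcent _ (b j).2 d
  -- apply lemA to conclude the inner coefficients vanish
  have hzero : ∀ j, (∑ i, (z i j : D₁) * v i) = 0 := by
    intro j
    exact lemA φ hφ r (fun j => (b j : D₂)) hbcent hbind
      (fun j => ∑ i, (z i j : D₁) * v i) hmain j
  have hzzero : ∀ i j, z i j = 0 := by
    intro i j
    have := hv (fun i => (z i j : D₁)) (fun i => (z i j).2) (hzero j) i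
    exact Subtype.ext this
  intro i
  rw [hci i]
  simp [hzzero]

end Aux

/-- If `D₁` and `D₂` are division rings that are `k`-algebras, each
finite-dimensional over its centre and with equal dimensions over their centres, then any
injective `k`-algebra homomorphism `φ : D₁ →ₐ[k] D₂` maps the centre of `D₁` into the
centre of `D₂`. -/
theorem stmt0 (k : Type*) [Field k] (D₁ D₂ : Type*) [DivisionRing D₁] [DivisionRing D₂]
    [Algebra k D₁] [Algebra k D₂]
    [FiniteDimensional (Subring.center D₁) D₁] [FiniteDimensional (Subring.center D₂) D₂]
    (hdim : Module.finrank (Subring.center D₁) D₁ = Module.finrank (Subring.center D₂) D₂)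
    (φ : D₁ →ₐ[k] D₂) (hφ : Function.Injective φ) :
    ∀ a ∈ Subring.center D₁, φ a ∈ Subring.center D₂ := by
  intro a ha
  by_contra hw
  set n := Module.finrank (Subring.center D₁) D₁ with hn
  set v : Module.Basis (Fin n) (Subring.center D₁) D₁ :=
    Module.finBasis (Subring.center D₁) D₁ with hvdef
  have hv : ∀ (z : Fin n → D₁), (∀ i, z i ∈ Subring.center D₁) →
      ∑ i, z i * v i = 0 → ∀ i, z i = 0 := by
    intro z hz hs i
    have hs' : ∑ i, (⟨z i, hz i⟩ : Subring.center D₁) • v i = 0 := by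
      rw [← hs]
      exact Finset.sum_congr rfl fun i _ => by rw [Subring.smul_def, smul_eq_mul]
    have := Fintype.linearIndependent_iff.mp v.linearIndependent
      (fun i => (⟨z i, hz i⟩ : Subring.center D₁)) hs' i
    exact congrArg Subtype.val this
  -- the doubled family
  set f : (Fin n ⊕ Fin n) → D₂ := Sum.elim (fun i => φ (v i)) (fun i => φ (v i) * φ a) with hf
  have hfind : LinearIndependent (Subring.center D₂) f := by
    rw [Fintype.linearIndependent_iff]
    intro g hg
    set c : Fin n → D₂ := fun i => (g (.inl i) : D₂) + (g (.inr i) : D₂) * φ a with hcdef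
    have hacomm : ∀ d : D₁, φ a * φ d = φ d * φ a := by
      intro d
      rw [← map_mul, ← map_mul, Subring.mem_center_iff.mp ha d]
    have hc : ∀ i (d : D₁), c i * φ d = φ d * c i := by
      intro i d
      have h1 : (g (.inl i) : D₂) * φ d = φ d * (g (.inl i) : D₂) :=
        (Subring.mem_center_iff.mp (g (.inl i)).2 (φ d)).symm
      have h2 : (g (.inr i) : D₂) * φ d = φ d * (g (.inr i) : D₂) :=
        (Subring.mem_center_iff.mp (g (.inr i)).2 (φ d)).symm
      calc ((g (.inl i) : D₂) + (g (.inr i) : D₂) * φ a) * φ d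
          = (g (.inl i) : D₂) * φ d + (g (.inr i) : D₂) * (φ a * φ d) := by
            rw [add_mul, mul_assoc]
        _ = φ d * (g (.inl i) : D₂) + (g (.inr i) : D₂) * φ d * φ a := by
            rw [h1, hacomm d, mul_assoc]
        _ = φ d * ((g (.inl i) : D₂) + (g (.inr i) : D₂) * φ a) := by
            rw [h2, mul_add, mul_assoc]
    have hrel : ∑ i, φ (v i) * c i = 0 := by
      rw [← hg, Fintype.sum_sum_type, ← Finset.sum_add_distrib]
      refine Finset.sum_congr rfl fun i _ => ?_
      have h1 : φ (v i) * (g (.inl i) : D₂) = (g (.inl i) : D₂) * φ (v i) :=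
        Subring.mem_center_iff.mp (g (.inl i)).2 (φ (v i))
      have h2 : φ (v i) * (g (.inr i) : D₂) = (g (.inr i) : D₂) * φ (v i) :=
        Subring.mem_center_iff.mp (g (.inr i)).2 (φ (v i))
      calc φ (v i) * ((g (.inl i) : D₂) + (g (.inr i) : D₂) * φ a)
          = φ (v i) * (g (.inl i) : D₂) + φ (v i) * (g (.inr i) : D₂) * φ a := by
            rw [mul_add, mul_assoc]
        _ = (g (.inl i) : D₂) * φ (v i) + (g (.inr i) : D₂) * (φ (v i) * φ a) := by
            rw [h1, h2, mul_assoc]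
        _ = g (Sum.inl i) • f (Sum.inl i) + g (Sum.inr i) • f (Sum.inr i) := by
            rw [hf]
            simp only [Sum.elim_inl, Sum.elim_inr, Subring.smul_def, smul_eq_mul]
    have hczero : ∀ i, c i = 0 := lemB φ hφ n v hv c hc hrel
    have hgr : ∀ i, g (.inr i) = 0 := by
      intro i
      by_contra hgr0
      apply hw
      have hci : (g (.inl i) : D₂) + (g (.inr i) : D₂) * φ a = 0 := hczero i
      have h5 : (g (.inr i) : D₂) * φ a = -(g (.inl i) : D₂) :=
        eq_neg_of_add_eq_zero_right hci
      have hinv : (((g (.inr i))⁻¹ : Subring.center D₂) : D₂) * (g (.inr i) : D₂) = 1 := by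
        have : ((g (.inr i))⁻¹ * g (.inr i) : Subring.center D₂) = 1 := inv_mul_cancel₀ hgr0
        calc (((g (.inr i))⁻¹ : Subring.center D₂) : D₂) * (g (.inr i) : D₂)
            = (((g (.inr i))⁻¹ * g (.inr i) : Subring.center D₂) : D₂) := rfl
          _ = 1 := by rw [this]; rfl
      have h6 : φ a = (((g (.inr i))⁻¹ * (-(g (.inl i))) : Subring.center D₂) : D₂) := by
        calc φ a = ((((g (.inr i))⁻¹ : Subring.center D₂) : D₂) * (g (.inr i) : D₂)) * φ a := by
              rw [hinv, one_mul]
          _ = (((g (.inr i))⁻¹ : Subring.center D₂) : D₂) * ((g (.inr i) : D₂) * φ a) := by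
              rw [mul_assoc]
          _ = (((g (.inr i))⁻¹ : Subring.center D₂) : D₂) * (-(g (.inl i) : D₂)) := by
              rw [h5]
          _ = (((g (.inr i))⁻¹ * (-(g (.inl i))) : Subring.center D₂) : D₂) := by
              push_cast
              ring_nf
      rw [h6]
      exact SetLike.coe_mem _
    have hgl : ∀ i, g (.inl i) = 0 := by
      intro i
      have hci : (g (.inl i) : D₂) + (g (.inr i) : D₂) * φ a = 0 := hczero i
      rw [hgr i] at hci
      simp only [ZeroMemClass.coe_zero, zero_mul, add_zero] at hci
      exact Subtype.ext hci
    intro i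
    cases i with
    | inl i => exact hgl i
    | inr i => exact hgr i
  have hcard := hfind.fintype_card_le_finrank
  rw [Fintype.card_sum, Fintype.card_fin] at hcard
  have hpos : 0 < n := Module.finrank_pos
  rw [← hdim] at hcard
  omega
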